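/- arXiv:2209.11438 — 3 statements merged into one kernel-verified Lean document; each statement's English description precedes it below -/
import Mathlib

section
/- If all m null hypotheses are true and the p-values are independent Uniform[0,1], then the Benjamini–Hochberg procedure at level α rejects at least one hypothesis with probability at most α. -/
open MeasureTheory ProbabilityTheory
open scoped ENNReal

/-- The Benjamini–Hochberg cutoff `k*`: the largest `k ≤ m` such that the `k`-th order
statistic satisfies `p_(k) ≤ k α / m`, equivalently such that at least `k` of the
p-values are `≤ k α / m` (with `k* = 0` if no such `k ≥ 1` exists). -/
noncomputable def bhKstar (m : ℕ) (α : ℝ) (p : Fin m → ℝ) : ℕ :=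
  ((Finset.range (m + 1)).filter
    (fun k : ℕ => k ≤ (Finset.univ.filter (fun i : Fin m => p i ≤ (k : ℝ) * α / m)).card)).sup id

namespace BHAux

variable {m : ℕ} {α : ℝ}

/-- The count of p-values below the k-th threshold. -/
noncomputable def Ncnt (m : ℕ) (α : ℝ) (p : Fin m → ℝ) (k : ℕ) : ℕ :=
  (Finset.univ.filter (fun i : Fin m => p i ≤ (k : ℝ) * α / m)).card

lemma bh_eq_sup (p : Fin m → ℝ) :
    bhKstar m α p = ((Finset.range (m + 1)).filter (fun k => k ≤ Ncnt m α p k)).sup id := rfl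

lemma mem_S_iff {p : Fin m → ℝ} {k : ℕ} :
    k ∈ (Finset.range (m + 1)).filter (fun k => k ≤ Ncnt m α p k) ↔
      k ≤ m ∧ k ≤ Ncnt m α p k := by
  simp [Finset.mem_filter, Finset.mem_range, Nat.lt_succ_iff]

lemma bh_le (p : Fin m → ℝ) : bhKstar m α p ≤ m := by
  rw [bh_eq_sup]
  exact Finset.sup_le fun j hj => (mem_S_iff.1 hj).1

lemma bh_mem (p : Fin m → ℝ) :
    bhKstar m α p ≤ m ∧ bhKstar m α p ≤ Ncnt m α p (bhKstar m α p) := by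
  have hne : ((Finset.range (m + 1)).filter (fun k => k ≤ Ncnt m α p k)).Nonempty :=
    ⟨0, mem_S_iff.2 ⟨Nat.zero_le _, Nat.zero_le _⟩⟩
  obtain ⟨b, hb, hbs⟩ := Finset.exists_mem_eq_sup _ hne id
  rw [bh_eq_sup, hbs]
  exact mem_S_iff.1 hb

lemma le_bh {p : Fin m → ℝ} {k : ℕ} (hk : k ≤ m) (hN : k ≤ Ncnt m α p k) :
    k ≤ bhKstar m α p :=
  Finset.le_sup (f := id) (mem_S_iff.2 ⟨hk, hN⟩)

lemma Ncnt_mono (hα : 0 ≤ α) (p : Fin m → ℝ) {j k : ℕ} (hjk : j ≤ k) :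
    Ncnt m α p j ≤ Ncnt m α p k := by
  apply Finset.card_le_card
  intro i hi
  rw [Finset.mem_filter] at hi ⊢
  refine ⟨hi.1, hi.2.trans ?_⟩
  have h1 : (j : ℝ) * α ≤ (k : ℝ) * α :=
    mul_le_mul_of_nonneg_right (by exact_mod_cast hjk) hα
  exact div_le_div_of_nonneg_right h1 (Nat.cast_nonneg m)

lemma Ncnt_le (p : Fin m → ℝ) (k : ℕ) : Ncnt m α p k ≤ m := by
  simpa [Ncnt] using Finset.card_le_card (Finset.filter_subset _ (Finset.univ : Finset (Fin m)))

/-- On the event `k* = k ≥ 1`, exactly `k` p-values are below the cutoff. -/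
lemma card_eq_of_bh (hα : 0 ≤ α) {p : Fin m → ℝ} {k : ℕ} (hk : 1 ≤ k)
    (hbh : bhKstar m α p = k) : Ncnt m α p k = k := by
  obtain ⟨hle, hN⟩ := bh_mem (α := α) p
  rw [hbh] at hle hN
  refine le_antisymm ?_ hN
  by_contra h
  push_neg at h
  rcases lt_or_eq_of_le hle with hlt | heq
  · have h1 : k + 1 ≤ Ncnt m α p (k + 1) :=
      le_trans h (Ncnt_mono hα p (Nat.le_succ k))
    have := le_bh (α := α) (Nat.succ_le_of_lt hlt) h1
    omega
  · have := Ncnt_le (α := α) p k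
    omega

lemma Ncnt_update_le (hα : 0 ≤ α) (p : Fin m → ℝ) (i : Fin m) (j : ℕ) :
    Ncnt m α p j ≤ Ncnt m α (Function.update p i 0) j := by
  apply Finset.card_le_card
  intro l hl
  rw [Finset.mem_filter] at hl ⊢
  refine ⟨hl.1, ?_⟩
  rcases eq_or_ne l i with rfl | h
  · rw [Function.update_self]
    positivity
  · rw [Function.update_of_ne h]; exact hl.2

lemma Ncnt_update_eq (hα : 0 ≤ α) {p : Fin m → ℝ} {i : Fin m} {k : ℕ}
    (hpi : p i ≤ (k : ℝ) * α / m) {j : ℕ} (hj : k ≤ j) :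
    Ncnt m α (Function.update p i 0) j = Ncnt m α p j := by
  have hle : (k : ℝ) * α / m ≤ (j : ℝ) * α / m :=
    div_le_div_of_nonneg_right (mul_le_mul_of_nonneg_right (by exact_mod_cast hj) hα)
      (Nat.cast_nonneg m)
  unfold Ncnt
  congr 1
  apply Finset.filter_congr
  intro l _
  rcases eq_or_ne l i with rfl | h
  · simp only [Function.update_self]
    constructor
    · intro _; exact hpi.trans hle
    · intro _; positivity
  · rw [Function.update_of_ne h]

/-- The key switching lemma. -/
lemma bh_switch (hα : 0 ≤ α) {p : Fin m → ℝ} {i : Fin m} {k : ℕ} (hk : 1 ≤ k)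
    (hpi : p i ≤ (k : ℝ) * α / m) :
    bhKstar m α p = k ↔ bhKstar m α (Function.update p i 0) = k := by
  constructor
  · intro h
    obtain ⟨hle, hN⟩ := bh_mem (α := α) p
    rw [h] at hle hN
    have hkq : k ≤ bhKstar m α (Function.update p i 0) := by
      apply le_bh hle
      rw [Ncnt_update_eq hα hpi le_rfl]; exact hN
    refine le_antisymm ?_ hkq
    rw [bh_eq_sup]
    apply Finset.sup_le
    intro j hj
    simp only [id_eq]
    obtain ⟨hjm, hjN⟩ := mem_S_iff.1 hj
    by_contra hc
    push_neg at hc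
    rw [Ncnt_update_eq hα hpi hc.le] at hjN
    have h2 : j ≤ bhKstar m α p := le_bh hjm hjN
    omega
  · intro h
    obtain ⟨hle, hN⟩ := bh_mem (α := α) (Function.update p i 0)
    rw [h] at hle hN
    rw [Ncnt_update_eq hα hpi le_rfl] at hN
    have hkp : k ≤ bhKstar m α p := le_bh hle hN
    refine le_antisymm ?_ hkp
    rw [bh_eq_sup]
    apply Finset.sup_le
    intro j hj
    simp only [id_eq]
    obtain ⟨hjm, hjN⟩ := mem_S_iff.1 hj
    by_contra hc
    push_neg at hc
    have hjN' : j ≤ Ncnt m α (Function.update p i 0) j := by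
      rw [Ncnt_update_eq hα hpi hc.le]; exact hjN
    have h2 : j ≤ bhKstar m α (Function.update p i 0) := le_bh hjm hjN'
    omega


lemma measurable_Ncnt (m : ℕ) (α : ℝ) (k : ℕ) :
    Measurable (fun p : Fin m → ℝ => Ncnt m α p k) := by
  have : (fun p : Fin m → ℝ => Ncnt m α p k) =
      fun p => ∑ i : Fin m, if p i ≤ (k : ℝ) * α / m then 1 else 0 := by
    funext p
    unfold Ncnt
    rw [Finset.card_filter]
  rw [this]
  apply Finset.measurable_sum
  intro i _
  exact Measurable.ite ((measurable_pi_apply i) measurableSet_Iic)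
    measurable_const measurable_const

lemma measurable_bh (m : ℕ) (α : ℝ) : Measurable (bhKstar m α) := by
  have hrep : bhKstar m α = (fun v : Fin (m + 1) → ℕ =>
      (Finset.univ.filter (fun k : Fin (m + 1) => (k : ℕ) ≤ v k)).sup (fun k => (k : ℕ))) ∘
      (fun p k => Ncnt m α p (k : ℕ)) := by
    funext p
    simp only [Function.comp_apply, bh_eq_sup]
    apply le_antisymm
    · apply Finset.sup_le
      intro j hj
      obtain ⟨hjm, hjN⟩ := mem_S_iff.1 hj
      refine Finset.le_sup (f := fun k : Fin (m+1) => (k : ℕ))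
        (b := ⟨j, Nat.lt_succ_of_le hjm⟩) (Finset.mem_filter.2 ⟨Finset.mem_univ _, ?_⟩)
      exact hjN
    · apply Finset.sup_le
      intro j hj
      obtain ⟨-, hjN⟩ := Finset.mem_filter.1 hj
      exact Finset.le_sup (f := id)
        (mem_S_iff.2 ⟨Nat.lt_succ_iff.1 j.isLt, hjN⟩)
  rw [hrep]
  exact (measurable_of_countable _).comp
    (measurable_pi_lambda _ (fun k => measurable_Ncnt m α k))

end BHAux

open BHAux

/-- If all `m` null hypotheses are true and the p-values are independent `Uniform[0,1]`,
then the Benjamini–Hochberg procedure at level `α` rejects at least one hypothesis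
(i.e. `k* ≥ 1`) with probability at most `α`. -/
theorem stmt3 {Ω : Type*} [MeasurableSpace Ω] (μ : Measure Ω) [IsProbabilityMeasure μ]
    (m : ℕ) (hm : 0 < m) (p : Fin m → Ω → ℝ) (hmeas : ∀ i, Measurable (p i))
    (hindep : iIndepFun p μ)
    (hunif : ∀ i, Measure.map (p i) μ = volume.restrict (Set.Icc (0 : ℝ) 1))
    (α : ℝ) (hα0 : 0 ≤ α) (hα1 : α ≤ 1) :
    μ {ω | 1 ≤ bhKstar m α (fun i => p i ω)} ≤ ENNReal.ofReal α := by
  classical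
  set c : ℕ → ℝ := fun k => (k : ℝ) * α / m with hc
  set P : Ω → Fin m → ℝ := fun ω i => p i ω with hP
  have hPmeas : Measurable P := measurable_pi_lambda _ hmeas
  set Q : Fin m → Ω → Fin m → ℝ := fun i ω => Function.update (fun j => p j ω) i 0 with hQ
  have hQmeas : ∀ i, Measurable (Q i) := by
    intro i
    apply measurable_pi_lambda
    intro j
    have : (fun ω => Q i ω j) = if j = i then (fun _ => (0:ℝ)) else p j := by
      funext ω
      by_cases h : j = i <;> simp [hQ, Function.update_apply, h]
    rw [this]
    by_cases h : j = i
    · rw [if_pos h]; exact measurable_const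
    · rw [if_neg h]; exact hmeas j
  set A : ℕ → Set Ω := fun k => {ω | bhKstar m α (P ω) = k} with hA
  set B : Fin m → ℕ → Set Ω := fun i k => {ω | bhKstar m α (Q i ω) = k} with hB
  set S : Fin m → ℕ → Set Ω := fun i k => {ω | p i ω ≤ c k} with hS
  have hAmeas : ∀ k, MeasurableSet (A k) := fun k =>
    (measurable_bh m α).comp hPmeas (measurableSet_singleton k)
  have hBmeas : ∀ i k, MeasurableSet (B i k) := fun i k =>
    (measurable_bh m α).comp (hQmeas i) (measurableSet_singleton k)
  have hSmeas : ∀ i k, MeasurableSet (S i k) := fun i k =>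
    (hmeas i) measurableSet_Iic
  -- independence of `p i` and the leave-one-out statistic
  have hindepB : ∀ i : Fin m, IndepFun (p i) (fun ω => bhKstar m α (Q i ω)) μ := by
    intro i
    have h1 := hindep.indepFun_finset {i} {i}ᶜ disjoint_compl_right hmeas
    have hφ : Measurable (fun v : (({i} : Finset (Fin m)) : Type _) → ℝ =>
        v ⟨i, Finset.mem_singleton_self i⟩) := measurable_pi_apply _
    set ψ : ((({i}ᶜ : Finset (Fin m)) : Type _) → ℝ) → ℕ := fun v =>
      bhKstar m α (fun j => if h : j = i then 0 else
        v ⟨j, Finset.mem_compl.2 (by simp [h])⟩) with hψ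
    have hψmeas : Measurable ψ := by
      apply (measurable_bh m α).comp
      apply measurable_pi_lambda
      intro j
      by_cases h : j = i
      · simp only [dif_pos h]; exact measurable_const
      · simp only [dif_neg h]; exact measurable_pi_apply _
    have h2 := h1.comp hφ hψmeas
    have he1 : ((fun v : (({i} : Finset (Fin m)) : Type _) → ℝ =>
        v ⟨i, Finset.mem_singleton_self i⟩) ∘ (fun ω (j : ({i} : Finset (Fin m))) => p j ω))
        = p i := rfl
    have he2 : (ψ ∘ (fun ω (j : ({i}ᶜ : Finset (Fin m))) => p j ω))
        = fun ω => bhKstar m α (Q i ω) := by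
      funext ω
      simp only [Function.comp_apply, hψ]
      congr 1
      funext j
      by_cases h : j = i
      · subst h; simp [hQ]
      · simp [hQ, h, Function.update_apply]
    rwa [he1, he2] at h2
  -- uniform distribution computation
  have hck0 : ∀ k : ℕ, 0 ≤ c k := by
    intro k
    apply div_nonneg (mul_nonneg (Nat.cast_nonneg _) hα0) (Nat.cast_nonneg _)
  have hck1 : ∀ k ≤ m, c k ≤ 1 := by
    intro k hk
    rw [hc, div_le_one (by exact_mod_cast hm)]
    calc (k : ℝ) * α ≤ (m : ℝ) * 1 :=
      mul_le_mul (by exact_mod_cast hk) hα1 hα0 (Nat.cast_nonneg _)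
    _ = m := mul_one _
  have hunifS : ∀ (i : Fin m) (k : ℕ), k ≤ m → μ (S i k) = ENNReal.ofReal (c k) := by
    intro i k hk
    have : S i k = p i ⁻¹' Set.Iic (c k) := rfl
    rw [this, ← Measure.map_apply (hmeas i) measurableSet_Iic, hunif i,
      Measure.restrict_apply measurableSet_Iic]
    have : Set.Iic (c k) ∩ Set.Icc 0 1 = Set.Icc 0 (c k) := by
      ext x
      simp only [Set.mem_inter_iff, Set.mem_Iic, Set.mem_Icc]
      constructor
      · rintro ⟨h1, h2, h3⟩; exact ⟨h2, h1⟩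
      · rintro ⟨h1, h2⟩; exact ⟨h2, h1, h2.trans (hck1 k hk)⟩
    rw [this, Real.volume_Icc, sub_zero]
  -- the counting identity
  have hcount : ∀ k : ℕ, 1 ≤ k → k ≤ m →
      (k : ℝ≥0∞) * μ (A k) = ∑ i : Fin m, μ (S i k ∩ A k) := by
    intro k hk1 hkm
    have hmeas_ind : ∀ i : Fin m, Measurable fun ω =>
        (S i k ∩ A k).indicator (fun _ => (1 : ℝ≥0∞)) ω :=
      fun i => measurable_const.indicator ((hSmeas i k).inter (hAmeas k))
    calc (k : ℝ≥0∞) * μ (A k)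
        = ∫⁻ ω, (A k).indicator (fun _ => (k : ℝ≥0∞)) ω ∂μ := by
          rw [lintegral_indicator_const (hAmeas k)]
      _ = ∫⁻ ω, ∑ i : Fin m, (S i k ∩ A k).indicator (fun _ => (1 : ℝ≥0∞)) ω ∂μ := by
          apply lintegral_congr
          intro ω
          by_cases hω : ω ∈ A k
          · have hval : bhKstar m α (P ω) = k := hω
            have hcard : Ncnt m α (P ω) k = k := card_eq_of_bh hα0 hk1 hval
            rw [Set.indicator_of_mem hω]
            have : ∀ i : Fin m, (S i k ∩ A k).indicator (fun _ => (1 : ℝ≥0∞)) ω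
                = if p i ω ≤ c k then 1 else 0 := by
              intro i
              by_cases hi : p i ω ≤ c k
              · have hmem : ω ∈ S i k ∩ A k := ⟨hi, hω⟩
                rw [Set.indicator_of_mem hmem, if_pos hi]
              · rw [Set.indicator_of_notMem (fun hmem => hi hmem.1), if_neg hi]
            rw [Finset.sum_congr rfl (fun i _ => this i)]
            have : (∑ i : Fin m, if p i ω ≤ c k then (1:ℝ≥0∞) else 0)
                = ((Ncnt m α (P ω) k : ℕ) : ℝ≥0∞) := by
              unfold Ncnt
              rw [Finset.card_filter]
              push_cast
              rfl
            rw [this, hcard]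
          · rw [Set.indicator_of_notMem hω]
            symm
            apply Finset.sum_eq_zero
            intro i _
            exact Set.indicator_of_notMem (fun hmem => hω hmem.2) _
      _ = ∑ i : Fin m, ∫⁻ ω, (S i k ∩ A k).indicator (fun _ => (1 : ℝ≥0∞)) ω ∂μ :=
          lintegral_finset_sum _ (fun i _ => hmeas_ind i)
      _ = ∑ i : Fin m, μ (S i k ∩ A k) := by
          apply Finset.sum_congr rfl
          intro i _
          exact lintegral_indicator_one ((hSmeas i k).inter (hAmeas k))
  -- switching
  have hswitch : ∀ (i : Fin m) (k : ℕ), 1 ≤ k → S i k ∩ A k = S i k ∩ B i k := by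
    intro i k hk1
    ext ω
    simp only [Set.mem_inter_iff, hS, hA, hB, Set.mem_setOf_eq]
    constructor
    · rintro ⟨h1, h2⟩
      exact ⟨h1, (bh_switch hα0 hk1 h1).1 h2⟩
    · rintro ⟨h1, h2⟩
      exact ⟨h1, (bh_switch hα0 hk1 h1).2 h2⟩
  -- measure of A k
  have hAk : ∀ k : ℕ, 1 ≤ k → k ≤ m →
      μ (A k) = ENNReal.ofReal (α / m) * ∑ i : Fin m, μ (B i k) := by
    intro k hk1 hkm
    have key : (k : ℝ≥0∞) * μ (A k)
        = (k : ℝ≥0∞) * (ENNReal.ofReal (α / m) * ∑ i : Fin m, μ (B i k)) := by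
      rw [hcount k hk1 hkm]
      have : ∀ i : Fin m, μ (S i k ∩ A k) = ENNReal.ofReal (c k) * μ (B i k) := by
        intro i
        rw [hswitch i k hk1]
        have := (hindepB i).measure_inter_preimage_eq_mul
          (s := Set.Iic (c k)) (t := {k}) measurableSet_Iic (measurableSet_singleton k)
        have h3 : μ (p i ⁻¹' Set.Iic (c k)) = ENNReal.ofReal (c k) := hunifS i k hkm
        have h4 : μ ((fun ω => bhKstar m α (Q i ω)) ⁻¹' {k}) = μ (B i k) := rfl
        have heq : (p i ⁻¹' Set.Iic (c k) ∩ (fun ω => bhKstar m α (Q i ω)) ⁻¹' {k})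
            = S i k ∩ B i k := rfl
        rw [heq] at this
        rw [this, h3, h4]
      rw [Finset.sum_congr rfl (fun i _ => this i), ← Finset.mul_sum]
      have : ENNReal.ofReal (c k) = (k : ℝ≥0∞) * ENNReal.ofReal (α / m) := by
        rw [hc]
        simp only []
        rw [mul_div_assoc, ENNReal.ofReal_mul (Nat.cast_nonneg k), ENNReal.ofReal_natCast]
      rw [this, mul_assoc]
    have hk0 : (k : ℝ≥0∞) ≠ 0 := by exact_mod_cast Nat.one_le_iff_ne_zero.1 hk1
    exact (ENNReal.mul_right_inj hk0 (ENNReal.natCast_ne_top k)).1 key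
  -- disjointness sums
  have hBsum : ∀ i : Fin m, ∑ k ∈ Finset.Icc 1 m, μ (B i k) ≤ 1 := by
    intro i
    have hdisj : (↑(Finset.Icc 1 m) : Set ℕ).PairwiseDisjoint (B i) := by
      intro x _ y _ hxy
      simp only [Function.onFun, Set.disjoint_left]
      intro ω hx hy
      exact hxy (hx.symm.trans hy)
    rw [← measure_biUnion_finset hdisj (fun k _ => hBmeas i k)]
    exact prob_le_one
  -- main event as a union
  have hunion : {ω | 1 ≤ bhKstar m α (fun i => p i ω)} = ⋃ k ∈ Finset.Icc 1 m, A k := by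
    ext ω
    simp only [Set.mem_setOf_eq, Set.mem_iUnion, Finset.mem_Icc, hA]
    constructor
    · intro h
      exact ⟨bhKstar m α (P ω), ⟨⟨h, bh_le _⟩, rfl⟩⟩
    · rintro ⟨k, ⟨hk1, -⟩, hk⟩
      rw [hk]; exact hk1
  rw [hunion]
  calc μ (⋃ k ∈ Finset.Icc 1 m, A k) ≤ ∑ k ∈ Finset.Icc 1 m, μ (A k) :=
        measure_biUnion_finset_le _ _
    _ = ENNReal.ofReal (α / m) * ∑ i : Fin m, ∑ k ∈ Finset.Icc 1 m, μ (B i k) := by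
        rw [Finset.sum_congr rfl (fun k hk => hAk k (Finset.mem_Icc.1 hk).1
          (Finset.mem_Icc.1 hk).2), ← Finset.mul_sum, Finset.sum_comm]
    _ ≤ ENNReal.ofReal (α / m) * ∑ _i : Fin m, (1 : ℝ≥0∞) := by
        gcongr with i _
        exact hBsum i
    _ = ENNReal.ofReal (α / m) * (m : ℝ≥0∞) := by simp
    _ = ENNReal.ofReal α := by
        rw [← ENNReal.ofReal_natCast m, ← ENNReal.ofReal_mul (div_nonneg hα0 (Nat.cast_nonneg m)),
          div_mul_cancel₀ α (by exact_mod_cast hm.ne')]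
end

section
/- For independent Uniform[0,1] p-values with m_0 true nulls out of m hypotheses, the Benjamini–Hochberg procedure at level α satisfies FDR = E[V/max(R,1)] ≤ (m_0/m)·α, where V is the number of true nulls rejected and R the total number of rejections. -/
open MeasureTheory ProbabilityTheory

namespace BHaux

variable {m : ℕ} {α : ℝ}

lemma bh_mem (p : Fin m → ℝ) :
    bhKstar m α p ∈ (Finset.range (m + 1)).filter
      (fun k : ℕ => k ≤ (Finset.univ.filter (fun i : Fin m => p i ≤ (k : ℝ) * α / m)).card) := by
  classical
  obtain ⟨b, hb, he⟩ := Finset.exists_mem_eq_sup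
    ((Finset.range (m + 1)).filter
      (fun k : ℕ => k ≤ (Finset.univ.filter (fun i : Fin m => p i ≤ (k : ℝ) * α / m)).card))
    ⟨0, by simp⟩ (id : ℕ → ℕ)
  have : bhKstar m α p = b := he
  rw [this]; exact hb

lemma bh_le (p : Fin m → ℝ) : bhKstar m α p ≤ m := by
  have := bh_mem (α := α) p
  rw [Finset.mem_filter, Finset.mem_range] at this
  omega

lemma bh_feas (p : Fin m → ℝ) :
    bhKstar m α p ≤ (Finset.univ.filter
      (fun i : Fin m => p i ≤ (bhKstar m α p : ℝ) * α / m)).card :=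
  (Finset.mem_filter.mp (bh_mem p)).2

lemma le_bh (p : Fin m → ℝ) {k : ℕ} (hk : k ≤ m)
    (h : k ≤ (Finset.univ.filter (fun i : Fin m => p i ≤ (k : ℝ) * α / m)).card) :
    k ≤ bhKstar m α p :=
  Finset.le_sup (f := id)
    (Finset.mem_filter.mpr ⟨Finset.mem_range.mpr (by omega), h⟩)

lemma filter_update_eq (p : Fin m → ℝ) (i : Fin m) {t : ℝ} (ht : 0 ≤ t) (hpi : p i ≤ t) :
    (Finset.univ.filter (fun j : Fin m => Function.update p i 0 j ≤ t)) =
      (Finset.univ.filter (fun j : Fin m => p j ≤ t)) := by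
  ext j
  simp only [Finset.mem_filter, Finset.mem_univ, true_and]
  by_cases h : j = i
  · subst h; simp [Function.update_self, ht, hpi]
  · simp [Function.update_of_ne h]

lemma bh_update_iff (hm : 0 < m) (hα : 0 ≤ α) (p : Fin m → ℝ) (i : Fin m) {k : ℕ}
    (hpi : p i ≤ (k : ℝ) * α / m) :
    bhKstar m α p = k ↔ bhKstar m α (Function.update p i 0) = k := by
  have hm' : (0:ℝ) < m := by exact_mod_cast hm
  have hmono : ∀ {a b : ℕ}, a ≤ b → (a : ℝ) * α / m ≤ (b : ℝ) * α / m := by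
    intro a b hab
    have : (a:ℝ) ≤ b := Nat.cast_le.mpr hab
    gcongr
  have ht0 : ∀ j : ℕ, (0:ℝ) ≤ (j : ℝ) * α / m := by
    intro j; positivity
  have hNeq : ∀ j : ℕ, k ≤ j →
      (Finset.univ.filter (fun l : Fin m => Function.update p i 0 l ≤ (j : ℝ) * α / m)) =
        (Finset.univ.filter (fun l : Fin m => p l ≤ (j : ℝ) * α / m)) :=
    fun j hj => filter_update_eq p i (ht0 j) (le_trans hpi (hmono hj))
  constructor
  · rintro rfl
    apply le_antisymm
    · by_contra hlt
      push_neg at hlt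
      have h1 := bh_feas (α := α) (Function.update p i 0)
      rw [hNeq _ hlt.le] at h1
      exact absurd (le_bh p (bh_le _) h1) (not_le.mpr hlt)
    · apply le_bh _ (bh_le p)
      rw [hNeq _ le_rfl]
      exact bh_feas p
  · rintro rfl
    apply le_antisymm
    · by_contra hlt
      push_neg at hlt
      have h1 := bh_feas (α := α) p
      rw [← hNeq _ hlt.le] at h1
      exact absurd (le_bh _ (bh_le p) h1) (not_le.mpr hlt)
    · apply le_bh _ (bh_le (Function.update p i 0))
      rw [← hNeq _ le_rfl]
      exact bh_feas (Function.update p i 0)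

lemma measurable_bhKstar (m : ℕ) (α : ℝ) : Measurable (bhKstar m α) := by
  classical
  have hrw : bhKstar m α = fun p =>
      (Finset.range (m + 1)).sup (fun k =>
        if k ≤ (Finset.univ.filter (fun i : Fin m => p i ≤ (k : ℝ) * α / m)).card then k
        else 0) := by
    funext p
    apply le_antisymm
    · apply Finset.sup_le
      intro k hk
      rw [Finset.mem_filter] at hk
      have : (if k ≤ (Finset.univ.filter (fun i : Fin m => p i ≤ (k : ℝ) * α / m)).card then k
          else 0) = k := if_pos hk.2
      have h2 := Finset.le_sup (f := fun k : ℕ =>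
        if k ≤ (Finset.univ.filter (fun i : Fin m => p i ≤ (k : ℝ) * α / m)).card then k
        else 0) hk.1
      rw [this] at h2
      exact h2
    · apply Finset.sup_le
      intro k hk
      by_cases h : k ≤ (Finset.univ.filter (fun i : Fin m => p i ≤ (k : ℝ) * α / m)).card
      · rw [if_pos h]
        exact Finset.le_sup (f := id) (Finset.mem_filter.mpr ⟨hk, h⟩)
      · rw [if_neg h]; exact Nat.zero_le _
  rw [hrw]
  have hN : ∀ k : ℕ, Measurable (fun p : Fin m → ℝ =>
      (Finset.univ.filter (fun i : Fin m => p i ≤ (k : ℝ) * α / m)).card) := by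
    intro k
    have : (fun p : Fin m → ℝ =>
        (Finset.univ.filter (fun i : Fin m => p i ≤ (k : ℝ) * α / m)).card) =
        fun p => ∑ i : Fin m, if p i ≤ (k : ℝ) * α / m then 1 else 0 := by
      funext p; rw [Finset.card_filter]
    rw [this]
    apply Finset.measurable_sum
    intro i _
    exact Measurable.ite (measurableSet_le (measurable_pi_apply i) measurable_const)
      measurable_const measurable_const
  induction (Finset.range (m + 1)) using Finset.induction_on with
  | empty => simp
  | @insert a s ha ih =>
    simp only [Finset.sup_insert]
    have hA : Measurable (fun p : Fin m → ℝ =>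
        if a ≤ (Finset.univ.filter (fun i : Fin m => p i ≤ (a : ℝ) * α / m)).card then a
        else 0) :=
      (measurable_from_top (f := fun n : ℕ => if a ≤ n then a else 0)).comp (hN a)
    exact hA.sup ih

variable {Ω : Type*} [MeasurableSpace Ω]

/-- A single true-null p-value is independent of the tuple of all other p-values. -/
lemma indep_single_rest (μ : Measure Ω) [IsProbabilityMeasure μ]
    {m : ℕ} (p : Fin m → Ω → ℝ) (hmeas : ∀ i, Measurable (p i))
    (trueNulls : Finset (Fin m))
    (hnullindep : iIndepFun
      (fun i : {i : Fin m // i ∈ trueNulls} => p i) μ)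
    (hsep : IndepFun (fun ω (i : {i : Fin m // i ∈ trueNulls}) => p i ω)
      (fun ω (i : {i : Fin m // i ∉ trueNulls}) => p i ω) μ)
    (i0 : Fin m) (hi0 : i0 ∈ trueNulls) :
    IndepFun (p i0)
      (fun ω => ((fun j : {j : {i : Fin m // i ∈ trueNulls} // j ≠ ⟨i0, hi0⟩} => p j.1.1 ω),
                 (fun j : {i : Fin m // i ∉ trueNulls} => p j.1 ω))) μ := by
  classical
  set ι₁ := {i : Fin m // i ∈ trueNulls}
  set ih0 : ι₁ := ⟨i0, hi0⟩
  set X : Ω → ℝ := p i0 with hX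
  set Y : Ω → ({j : ι₁ // j ≠ ih0} → ℝ) := fun ω => fun j => p j.1.1 ω with hYdef
  set Z : Ω → ({i : Fin m // i ∉ trueNulls} → ℝ) := fun ω => fun j => p j.1 ω with hZdef
  set T : Ω → (ι₁ → ℝ) := fun ω => fun j => p j.1 ω with hTdef
  have mX : Measurable X := hmeas i0
  have mY : Measurable Y := measurable_pi_lambda _ fun j => hmeas _
  have mZ : Measurable Z := measurable_pi_lambda _ fun j => hmeas _
  have mT : Measurable T := measurable_pi_lambda _ fun j => hmeas _
  have h1 : IndepFun X Y μ := by
    have hd : Disjoint ({ih0} : Finset ι₁) (Finset.univ.erase ih0) :=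
      by simp [Finset.disjoint_left]
    have h := hnullindep.indepFun_finset {ih0} (Finset.univ.erase ih0) hd (fun j => hmeas _)
    have h2 := h.comp
      (φ := fun v : (({ih0} : Finset ι₁) → ℝ) => v ⟨ih0, Finset.mem_singleton_self ih0⟩)
      (ψ := fun v : ({x : ι₁ // x ∈ Finset.univ.erase ih0} → ℝ) =>
        fun j : {j : ι₁ // j ≠ ih0} =>
          v ⟨j.1, Finset.mem_erase.mpr ⟨j.2, Finset.mem_univ _⟩⟩)
      (measurable_pi_apply (X := fun _ => ℝ) _)
      (measurable_pi_lambda _ fun j => measurable_pi_apply _)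
    exact h2
  have hYT : MeasurableSpace.comap Y inferInstance ≤ MeasurableSpace.comap T inferInstance := by
    have : Y = (fun v : ι₁ → ℝ => fun j : {j : ι₁ // j ≠ ih0} => v j.1) ∘ T := rfl
    rw [this, ← MeasurableSpace.comap_comp]
    exact MeasurableSpace.comap_mono
      (measurable_iff_comap_le.mp (measurable_pi_lambda _ fun j => measurable_pi_apply _))
  have hXT : ∀ s : Set ℝ, MeasurableSet s →
      MeasurableSet[MeasurableSpace.comap T inferInstance] (X ⁻¹' s) := by
    intro s hs
    exact ⟨(fun v : ι₁ → ℝ => v ih0) ⁻¹' s, (measurable_pi_apply ih0) hs, rfl⟩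
  have hmain : Indep (MeasurableSpace.comap X inferInstance)
      ((MeasurableSpace.comap Y inferInstance) ⊔ (MeasurableSpace.comap Z inferInstance)) μ := by
    apply IndepSets.indep (measurable_iff_comap_le.mp mX)
      (sup_le (measurable_iff_comap_le.mp mY) (measurable_iff_comap_le.mp mZ))
      (p1 := {s | ∃ t, MeasurableSet t ∧ X ⁻¹' t = s})
      (p2 := {s | ∃ b c, MeasurableSet[MeasurableSpace.comap Y inferInstance] b ∧
        MeasurableSet[MeasurableSpace.comap Z inferInstance] c ∧ s = b ∩ c})
    · rintro s ⟨ts, hts, rfl⟩ t ⟨tt, htt, rfl⟩ -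
      exact ⟨ts ∩ tt, hts.inter htt, Set.preimage_inter⟩
    · rintro s ⟨b1, c1, hb1, hc1, rfl⟩ t ⟨b2, c2, hb2, hc2, rfl⟩ -
      exact ⟨b1 ∩ b2, c1 ∩ c2, hb1.inter hb2, hc1.inter hc2, by
        rw [Set.inter_inter_inter_comm]⟩
    · exact MeasurableSpace.comap_eq_generateFrom _ _
    · apply le_antisymm
      · apply sup_le
        · intro s hs
          exact MeasurableSpace.measurableSet_generateFrom
            ⟨s, Set.univ, hs, MeasurableSet.univ, (Set.inter_univ s).symm⟩
        · intro s hs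
          exact MeasurableSpace.measurableSet_generateFrom
            ⟨Set.univ, s, MeasurableSet.univ, hs, (Set.univ_inter s).symm⟩
      · apply MeasurableSpace.generateFrom_le
        rintro s ⟨b, c, hb, hc, rfl⟩
        have hb' : MeasurableSet[(MeasurableSpace.comap Y inferInstance) ⊔
            (MeasurableSpace.comap Z inferInstance)] b :=
          (MeasurableSpace.le_def.mp le_sup_left) b hb
        have hc' : MeasurableSet[(MeasurableSpace.comap Y inferInstance) ⊔
            (MeasurableSpace.comap Z inferInstance)] c :=
          (MeasurableSpace.le_def.mp le_sup_right) c hc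
        exact hb'.inter hc'
    · rw [IndepSets_iff]
      rintro A B ⟨s, hs, rfl⟩ ⟨b, c, hb, hc, rfl⟩
      obtain ⟨b', hb', rfl⟩ := hb
      have hbT : MeasurableSet[MeasurableSpace.comap T inferInstance] (Y ⁻¹' b') :=
        (MeasurableSpace.le_def.mp hYT) _ ⟨b', hb', rfl⟩
      have hABT : MeasurableSet[MeasurableSpace.comap T inferInstance]
          ((X ⁻¹' s) ∩ (Y ⁻¹' b')) := (hXT s hs).inter hbT
      have e1 : μ ((X ⁻¹' s) ∩ (Y ⁻¹' b' ∩ c)) = μ ((X ⁻¹' s ∩ Y ⁻¹' b') ∩ c) := by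
        rw [Set.inter_assoc]
      rw [e1, hsep.meas_inter hABT hc,
        h1.meas_inter ⟨s, hs, rfl⟩ ⟨b', hb', rfl⟩,
        hsep.meas_inter hbT hc, mul_assoc]
  rw [IndepFun_iff_Indep]
  apply indep_of_indep_of_le_right hmain
  rw [← measurable_iff_comap_le]
  exact Measurable.prodMk
    (Measurable.mono (measurable_iff_comap_le.mpr le_rfl) le_sup_left le_rfl)
    (Measurable.mono (measurable_iff_comap_le.mpr le_rfl) le_sup_right le_rfl)

end BHaux

/-- Benjamini–Hochberg (1995): with `m₀` true nulls out of `m`, whose p-values are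
i.i.d. `Uniform[0,1]` and independent of the false-null p-values, the BH procedure
at level `α` (rejecting the `k*` smallest p-values, i.e. all `i` with
`p i ≤ k* α / m`) satisfies `FDR = E[V / max(R,1)] ≤ (m₀ / m) α`. -/
theorem stmt4 {Ω : Type*} [MeasurableSpace Ω] (μ : Measure Ω) [IsProbabilityMeasure μ]
    (m : ℕ) (hm : 0 < m) (p : Fin m → Ω → ℝ) (hmeas : ∀ i, Measurable (p i))
    (trueNulls : Finset (Fin m)) (m₀ : ℕ) (hm₀ : m₀ = trueNulls.card)
    (hunif : ∀ i ∈ trueNulls, Measure.map (p i) μ = volume.restrict (Set.Icc (0 : ℝ) 1))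
    (hnullindep : iIndepFun
      (fun i : {i : Fin m // i ∈ trueNulls} => p i) μ)
    (hsep : IndepFun (fun ω (i : {i : Fin m // i ∈ trueNulls}) => p i ω)
      (fun ω (i : {i : Fin m // i ∉ trueNulls}) => p i ω) μ)
    (α : ℝ) (hα0 : 0 ≤ α) (hα1 : α ≤ 1)
    (R : Ω → ℕ) (hR : ∀ ω, R ω = bhKstar m α (fun i => p i ω))
    (V : Ω → ℕ)
    (hV : ∀ ω, V ω = (trueNulls.filter (fun i => p i ω ≤ (R ω : ℝ) * α / m)).card) :
    (∫ ω, (V ω : ℝ) / max (R ω : ℝ) 1 ∂μ) ≤ (m₀ : ℝ) / m * α := by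
  classical
  have hm' : (0:ℝ) < m := by exact_mod_cast hm
  set Ri : Fin m → Ω → ℕ :=
    fun i ω => bhKstar m α (Function.update (fun j => p j ω) i 0) with hRi
  set A : Fin m → ℕ → Set Ω := fun i k => p i ⁻¹' Set.Iic ((k : ℝ) * α / m) with hA
  set B : ℕ → Set Ω := fun k => R ⁻¹' {k} with hB
  set C : Fin m → ℕ → Set Ω := fun i k => Ri i ⁻¹' {k} with hC
  have hmeasA : ∀ i k, MeasurableSet (A i k) := fun i k => (hmeas i) measurableSet_Iic
  have hmeasR : Measurable R := by
    have hReq : R = fun ω => bhKstar m α (fun i => p i ω) := funext hR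
    rw [hReq]
    exact (BHaux.measurable_bhKstar m α).comp (measurable_pi_lambda _ hmeas)
  have hmeasRi : ∀ i, Measurable (Ri i) := by
    intro i
    apply (BHaux.measurable_bhKstar m α).comp
    apply measurable_pi_lambda
    intro j
    by_cases h : j = i
    · subst h
      simpa [Function.update_self] using measurable_const
    · simpa [Function.update_of_ne h] using hmeas j
  have hmeasB : ∀ k, MeasurableSet (B k) := fun k => hmeasR (measurableSet_singleton k)
  have hmeasC : ∀ i k, MeasurableSet (C i k) :=
    fun i k => (hmeasRi i) (measurableSet_singleton k)
  -- the crucial exchange of events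
  have hsetEq : ∀ i k, A i k ∩ B k = A i k ∩ C i k := by
    intro i k
    ext ω
    simp only [hA, hB, hC, hRi, Set.mem_inter_iff, Set.mem_preimage, Set.mem_Iic,
      Set.mem_singleton_iff]
    refine and_congr_right fun hp => ?_
    rw [hR ω]
    exact BHaux.bh_update_iff (α := α) hm hα0 (fun j => p j ω) i (k := k) hp
  -- independence of p i and Ri i
  have hindep : ∀ i, i ∈ trueNulls → IndepFun (p i) (Ri i) μ := by
    intro i hi
    have hbase := BHaux.indep_single_rest μ p hmeas trueNulls hnullindep hsep i hi
    set F : ({j : {x : Fin m // x ∈ trueNulls} // j ≠ (⟨i, hi⟩ : {x : Fin m // x ∈ trueNulls})} → ℝ) ×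
        ({x : Fin m // x ∉ trueNulls} → ℝ) → (Fin m → ℝ) :=
      fun yz j => if h1 : j ∈ trueNulls then
          (if h2 : j = i then 0 else yz.1 ⟨⟨j, h1⟩, fun he => h2 (congrArg Subtype.val he)⟩)
        else yz.2 ⟨j, h1⟩ with hF
    have hFmeas : Measurable F := by
      apply measurable_pi_lambda
      intro j
      by_cases h1 : j ∈ trueNulls
      · by_cases h2 : j = i
        · simp only [hF, dif_pos h1, dif_pos h2]
          exact measurable_const
        · simp only [hF, dif_pos h1, dif_neg h2]
          exact (measurable_pi_apply _).comp measurable_fst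
      · simp only [hF, dif_neg h1]
        exact (measurable_pi_apply _).comp measurable_snd
    have hcomp := hbase.comp (φ := id) measurable_id
      ((BHaux.measurable_bhKstar m α).comp hFmeas)
    have heq : ((bhKstar m α ∘ F) ∘ (fun ω =>
        ((fun j : {j : {x : Fin m // x ∈ trueNulls} // j ≠ ⟨i, hi⟩} => p j.1.1 ω),
         (fun j : {x : Fin m // x ∉ trueNulls} => p j.1 ω)))) = Ri i := by
      funext ω
      simp only [Function.comp_apply, hRi]
      congr 1
      funext j
      by_cases h2 : j = i
      · subst h2
        simp [hF, Function.update_self, hi]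
      · by_cases h1 : j ∈ trueNulls
        · simp [hF, dif_pos h1, dif_neg h2, Function.update_of_ne h2]
        · simp [hF, dif_neg h1, Function.update_of_ne h2]
    rwa [Function.id_comp, heq] at hcomp
  -- law of a true null p-value
  have hlaw : ∀ i ∈ trueNulls, ∀ k : ℕ, k ≤ m →
      μ (A i k) = ENNReal.ofReal ((k : ℝ) * α / m) := by
    intro i hi k hk
    have ht0 : (0:ℝ) ≤ (k : ℝ) * α / m := by positivity
    have ht1 : (k : ℝ) * α / m ≤ 1 := by
      rw [div_le_one hm']
      calc (k : ℝ) * α ≤ (k : ℝ) * 1 := by gcongr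
        _ = k := mul_one _
        _ ≤ m := Nat.cast_le.mpr hk
    have h1 : μ (A i k) = (Measure.map (p i) μ) (Set.Iic ((k : ℝ) * α / m)) :=
      (Measure.map_apply (hmeas i) measurableSet_Iic).symm
    rw [h1, hunif i hi, Measure.restrict_apply measurableSet_Iic]
    have hseteq : Set.Iic ((k : ℝ) * α / m) ∩ Set.Icc (0:ℝ) 1 =
        Set.Icc (0:ℝ) ((k : ℝ) * α / m) := by
      ext x
      simp only [Set.mem_inter_iff, Set.mem_Iic, Set.mem_Icc]
      constructor
      · rintro ⟨h1, h2, h3⟩; exact ⟨h2, h1⟩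
      · rintro ⟨h1, h2⟩; exact ⟨h2, h1, le_trans h2 ht1⟩
    rw [hseteq, Real.volume_Icc, sub_zero]
  -- value of each term
  have hABval : ∀ i ∈ trueNulls, ∀ k ∈ Finset.range (m+1),
      (μ (A i k ∩ B k)).toReal = ((k : ℝ) * α / m) * (μ (C i k)).toReal := by
    intro i hi k hk
    rw [Finset.mem_range] at hk
    have hk' : k ≤ m := Nat.lt_succ_iff.mp hk
    have hprod : μ (A i k ∩ C i k) = μ (A i k) * μ (C i k) :=
      (hindep i hi).measure_inter_preimage_eq_mul _ _ measurableSet_Iic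
        (measurableSet_singleton k)
    rw [hsetEq i k, hprod, hlaw i hi k hk', ENNReal.toReal_mul,
      ENNReal.toReal_ofReal (by positivity)]
  have hRle : ∀ ω, R ω ≤ m := fun ω => by rw [hR ω]; exact BHaux.bh_le _
  set c : ℕ → ℝ := fun k => ((max k 1 : ℕ) : ℝ)⁻¹ with hc
  -- pointwise decomposition
  have hptwise : ∀ ω, (V ω : ℝ) / max (R ω : ℝ) 1 =
      ∑ k ∈ Finset.range (m+1), ∑ i ∈ trueNulls,
        (A i k ∩ B k).indicator (fun _ => c k) ω := by
    intro ω
    rw [Finset.sum_eq_single (R ω)]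
    · have hind : ∀ i, (A i (R ω) ∩ B (R ω)).indicator (fun _ => c (R ω)) ω
          = if p i ω ≤ ((R ω : ℝ) * α / m) then c (R ω) else 0 := by
        intro i
        rw [Set.indicator_apply]
        refine if_congr ?_ rfl rfl
        simp [hA, hB, Set.mem_inter_iff, Set.mem_preimage, Set.mem_Iic]
      rw [Finset.sum_congr rfl (fun i _ => hind i), ← Finset.sum_filter]
      rw [Finset.sum_const, ← hV ω]
      rw [nsmul_eq_mul, div_eq_mul_inv]
      congr 1
      simp only [hc]
      norm_cast
    · intro k _ hne
      apply Finset.sum_eq_zero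
      intro i _
      apply Set.indicator_of_notMem
      rintro ⟨-, hBk⟩
      rw [hB] at hBk
      simp only [Set.mem_preimage, Set.mem_singleton_iff] at hBk
      exact hne hBk.symm
    · intro habs
      exact absurd (Finset.mem_range.mpr (Nat.lt_succ_of_le (hRle ω))) habs
  -- compute the integral
  have hint : (∫ ω, (V ω : ℝ) / max (R ω : ℝ) 1 ∂μ) =
      ∑ k ∈ Finset.range (m+1), ∑ i ∈ trueNulls,
        (μ (A i k ∩ B k)).toReal * c k := by
    rw [show (fun ω => (V ω : ℝ) / max (R ω : ℝ) 1) = fun ω =>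
        ∑ k ∈ Finset.range (m+1), ∑ i ∈ trueNulls,
          (A i k ∩ B k).indicator (fun _ => c k) ω from funext hptwise]
    rw [integral_finset_sum _ (fun k _ => integrable_finset_sum _
      (fun i _ => (integrable_const _).indicator ((hmeasA i k).inter (hmeasB k))))]
    refine Finset.sum_congr rfl fun k _ => ?_
    rw [integral_finset_sum _
      (fun i _ => (integrable_const _).indicator ((hmeasA i k).inter (hmeasB k)))]
    refine Finset.sum_congr rfl fun i _ => ?_
    rw [integral_indicator_const _ ((hmeasA i k).inter (hmeasB k)), smul_eq_mul]
    rfl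
  rw [hint, Finset.sum_comm]
  -- bound each true null's contribution by α/m
  have hperI : ∀ i ∈ trueNulls,
      (∑ k ∈ Finset.range (m+1), (μ (A i k ∩ B k)).toReal * c k) ≤ α / m := by
    intro i hi
    have hsumC : ∑ k ∈ Finset.range (m+1), (μ (C i k)).toReal ≤ 1 := by
      have hdisj : (↑(Finset.range (m+1)) : Set ℕ).PairwiseDisjoint (C i) := by
        intro a _ b _ hab
        simp only [Function.onFun, hC]
        rw [Set.disjoint_left]
        rintro ω ha hb
        simp only [Set.mem_preimage, Set.mem_singleton_iff] at ha hb
        exact hab (ha.symm.trans hb)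
      have hsum : ∑ k ∈ Finset.range (m+1), μ (C i k) =
          μ (⋃ k ∈ Finset.range (m+1), C i k) :=
        (measure_biUnion_finset hdisj (fun k _ => hmeasC i k)).symm
      calc ∑ k ∈ Finset.range (m+1), (μ (C i k)).toReal
          = (μ (⋃ k ∈ Finset.range (m+1), C i k)).toReal := by
            rw [← ENNReal.toReal_sum (fun a _ => measure_ne_top μ _), hsum]
        _ ≤ (1 : ENNReal).toReal := ENNReal.toReal_mono ENNReal.one_ne_top prob_le_one
        _ = 1 := ENNReal.toReal_one
    calc ∑ k ∈ Finset.range (m+1), (μ (A i k ∩ B k)).toReal * c k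
        ≤ ∑ k ∈ Finset.range (m+1), (α / m) * (μ (C i k)).toReal := by
          apply Finset.sum_le_sum
          intro k hk
          rw [hABval i hi k hk]
          have hkc : ((k : ℝ) * α / m) * c k ≤ α / m := by
            rcases Nat.eq_zero_or_pos k with rfl | hkpos
            · simp only [Nat.cast_zero, zero_mul, zero_div, zero_mul]
              positivity
            · have hmax : max k 1 = k := Nat.max_eq_left hkpos
              have hk0 : (k : ℝ) ≠ 0 := Nat.cast_ne_zero.mpr hkpos.ne'
              simp only [hc, hmax]
              have heqq : ((k:ℝ) * α / m) * ((k:ℝ))⁻¹ = α / m := by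
                field_simp
              exact heqq.le
          calc ((k : ℝ) * α / m) * (μ (C i k)).toReal * c k
              = (((k : ℝ) * α / m) * c k) * (μ (C i k)).toReal := by ring
            _ ≤ (α / m) * (μ (C i k)).toReal := by
                apply mul_le_mul_of_nonneg_right hkc ENNReal.toReal_nonneg
      _ = (α / m) * ∑ k ∈ Finset.range (m+1), (μ (C i k)).toReal := by
          rw [Finset.mul_sum]
      _ ≤ (α / m) * 1 := by
          apply mul_le_mul_of_nonneg_left hsumC (by positivity)
      _ = α / m := mul_one _
  calc ∑ i ∈ trueNulls, ∑ k ∈ Finset.range (m+1), (μ (A i k ∩ B k)).toReal * c k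
      ≤ ∑ _i ∈ trueNulls, α / m := Finset.sum_le_sum hperI
    _ = trueNulls.card • (α / m) := Finset.sum_const _
    _ = (m₀ : ℝ) / m * α := by
        rw [nsmul_eq_mul, ← hm₀]
        ring
end

section
/- Let Δ = σ²λ₄ − λ₂² > 0. The function G(u) = Φ(u√(λ₄/Δ)) − √(2πλ₂²/(λ₄σ²)) · φ(u/σ) · Φ(u√(λ₂²/(Δσ²))) is nondecreasing in u; i.e., the Palm distribution 1 − F_γ is a genuine CDF. -/
/-- The standard normal density `φ`. -/
noncomputable def phi (x : ℝ) : ℝ := (Real.sqrt (2 * Real.pi))⁻¹ * Real.exp (-x ^ 2 / 2)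

/-- The standard normal CDF `Φ`. -/
noncomputable def Phi (x : ℝ) : ℝ := ∫ t in Set.Iic x, phi t

open Real MeasureTheory Set Filter

lemma phi_pos (x : ℝ) : 0 < phi x := by
  unfold phi
  have := Real.pi_pos
  positivity

lemma continuous_phi : Continuous phi := by
  unfold phi
  fun_prop

lemma integrable_phi : Integrable phi := by
  have : phi = fun x => (Real.sqrt (2 * Real.pi))⁻¹ * Real.exp (-(1/2) * x ^ 2) := by
    funext x; unfold phi; ring_nf
  rw [this]
  exact (integrable_exp_neg_mul_sq (by norm_num)).const_mul _

lemma hasDerivAt_phi (x : ℝ) : HasDerivAt phi (-x * phi x) x := by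
  unfold phi
  have h1 : HasDerivAt (fun x : ℝ => -x ^ 2 / 2) (-x) x := by
    have := ((hasDerivAt_pow 2 x).neg).div_const 2
    simpa using this.congr_deriv (by ring)
  have h2 := (h1.exp).const_mul (Real.sqrt (2 * Real.pi))⁻¹
  exact h2.congr_deriv (by ring)

lemma tendsto_phi_atBot : Tendsto phi atBot (nhds 0) := by
  have hsq : Tendsto (fun x : ℝ => x ^ 2) atBot atTop := by
    simpa [sq] using Filter.Tendsto.atBot_mul_atBot₀ (tendsto_id (α := ℝ)) tendsto_id
  have h1 : Tendsto (fun x : ℝ => -x ^ 2 / 2) atBot atBot := by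
    apply Tendsto.atBot_div_const (by norm_num)
    simpa using tendsto_neg_atBot_iff.mpr hsq
  have h2 := Real.tendsto_exp_atBot.comp h1
  have h3 : Tendsto (fun x : ℝ => (Real.sqrt (2*Real.pi))⁻¹ * Real.exp (-x^2/2)) atBot
      (nhds ((Real.sqrt (2*Real.pi))⁻¹ * 0)) := h2.const_mul _
  rw [mul_zero] at h3
  exact h3

lemma hasDerivAt_Phi (x : ℝ) : HasDerivAt Phi (phi x) x := by
  have key : ∀ y : ℝ, Phi y = (∫ t in (0:ℝ)..y, phi t) + Phi 0 := by
    intro y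
    have := intervalIntegral.integral_Iic_sub_Iic (integrable_phi.integrableOn) (integrable_phi.integrableOn) (a := (0:ℝ)) (b := y)
    unfold Phi
    linarith [this]
  have h : HasDerivAt (fun y => (∫ t in (0:ℝ)..y, phi t) + Phi 0) (phi x) x := by
    have := (intervalIntegral.integral_hasDerivAt_right (a := (0:ℝ)) (b := x)
      (integrable_phi.intervalIntegrable)
      (continuous_phi.stronglyMeasurable.stronglyMeasurableAtFilter)
      (continuous_phi.continuousAt)).add_const (Phi 0)
    simpa using this
  exact h.congr_of_eventuallyEq (by filter_upwards with y using key y)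

lemma integrable_mul_phi : Integrable (fun s : ℝ => s * phi s) := by
  have h : (fun s : ℝ => s * phi s)
      = fun s => (Real.sqrt (2*Real.pi))⁻¹ * (s * Real.exp (-(1/2) * s^2)) := by
    funext s; unfold phi; ring_nf
  rw [h]
  exact (integrable_mul_exp_neg_mul_sq (by norm_num)).const_mul _

lemma integral_mul_phi (t : ℝ) : ∫ s in Iic t, s * phi s = - phi t := by
  have h := integral_Iic_of_hasDerivAt_of_tendsto' (f := fun s => -phi s)
    (f' := fun s => s * phi s) (a := t)
    (fun x _ => by have := (hasDerivAt_phi x).neg; simp only [neg_mul, neg_neg] at this; exact this)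
    (integrable_mul_phi.integrableOn)
    (by simpa using tendsto_phi_atBot.neg)
  simpa using h

lemma psi_nonneg (t : ℝ) : 0 ≤ phi t + t * Phi t := by
  have hi1 : IntegrableOn (fun s : ℝ => t * phi s) (Iic t) :=
    (integrable_phi.const_mul t).integrableOn
  have hi2 : IntegrableOn (fun s : ℝ => s * phi s) (Iic t) := integrable_mul_phi.integrableOn
  have h1 : ∫ s in Iic t, (t - s) * phi s = t * Phi t + phi t := by
    have he : ∀ s:ℝ, (t - s) * phi s = t * phi s - s * phi s := fun s => by ring
    simp_rw [he]
    rw [MeasureTheory.integral_sub hi1 hi2, integral_const_mul, integral_mul_phi]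
    unfold Phi; ring
  have h2 : 0 ≤ ∫ s in Iic t, (t - s) * phi s :=
    MeasureTheory.setIntegral_nonneg measurableSet_Iic
      (fun s hs => mul_nonneg (by linarith [mem_Iic.mp hs]) (phi_pos s).le)
  linarith

/-- With `Δ = σ²λ₄ − λ₂² > 0`, the function
`G(u) = Φ(u√(λ₄/Δ)) − √(2πλ₂²/(λ₄σ²)) φ(u/σ) Φ(u√(λ₂²/(Δσ²)))`
is nondecreasing in `u`; i.e. the Palm distribution `1 − F_γ` is a genuine CDF. -/
theorem stmt6 (σ lam2 lam4 : ℝ) (hσ : 0 < σ) (h2 : 0 < lam2) (h4 : 0 < lam4)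
    (Δ : ℝ) (hΔdef : Δ = σ ^ 2 * lam4 - lam2 ^ 2) (hΔ : 0 < Δ)
    (G : ℝ → ℝ)
    (hG : ∀ u, G u = Phi (u * Real.sqrt (lam4 / Δ)) -
      Real.sqrt (2 * Real.pi * lam2 ^ 2 / (lam4 * σ ^ 2)) * phi (u / σ) *
        Phi (u * Real.sqrt (lam2 ^ 2 / (Δ * σ ^ 2)))) :
    Monotone G := by
  have hπ := Real.pi_pos
  set s2 : ℝ := Real.sqrt (2 * Real.pi) with hs2def
  set s4 : ℝ := Real.sqrt lam4 with hs4def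
  set sd : ℝ := Real.sqrt Δ with hsddef
  have hs2 : 0 < s2 := Real.sqrt_pos.mpr (by positivity)
  have hs4 : 0 < s4 := Real.sqrt_pos.mpr h4
  have hsd : 0 < sd := Real.sqrt_pos.mpr hΔ
  have hs2sq : s2 ^ 2 = 2 * Real.pi := Real.sq_sqrt (by positivity)
  have hs4sq : s4 ^ 2 = lam4 := Real.sq_sqrt h4.le
  have hsdsq : sd ^ 2 = Δ := Real.sq_sqrt hΔ.le
  set b : ℝ := lam2 / (sd * σ) with hbdef
  set c : ℝ := s2 * lam2 / (s4 * σ) with hcdef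
  set C : ℝ := s2 * sd / (s4 * σ ^ 2) with hCdef
  have ha : Real.sqrt (lam4 / Δ) = s4 / sd := by
    rw [show lam4 / Δ = (s4 / sd) ^ 2 by rw [div_pow, hs4sq, hsdsq],
      Real.sqrt_sq (by positivity)]
  have hb : Real.sqrt (lam2 ^ 2 / (Δ * σ ^ 2)) = b := by
    rw [show lam2 ^ 2 / (Δ * σ ^ 2) = b ^ 2 by
      rw [hbdef, div_pow, mul_pow, hsdsq], Real.sqrt_sq (by positivity)]
  have hc : Real.sqrt (2 * Real.pi * lam2 ^ 2 / (lam4 * σ ^ 2)) = c := by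
    rw [show 2 * Real.pi * lam2 ^ 2 / (lam4 * σ ^ 2) = c ^ 2 by
      rw [hcdef, div_pow, mul_pow, mul_pow, hs2sq, hs4sq], Real.sqrt_sq (by positivity)]
  have hGfun : G = fun u => Phi (u * (s4 / sd)) - c * phi (u / σ) * Phi (u * b) := by
    funext u; rw [hG u, ha, hb, hc]
  have hDer : ∀ u : ℝ, HasDerivAt G
      (C * phi (u / σ) * (phi (u * b) + (u * b) * Phi (u * b))) u := by
    intro u
    have h1 : HasDerivAt (fun u : ℝ => Phi (u * (s4 / sd))) (phi (u * (s4 / sd)) * (s4 / sd)) u :=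
      HasDerivAt.comp (h₂ := Phi) u (hasDerivAt_Phi (u * (s4 / sd))) (hasDerivAt_mul_const (s4 / sd))
    have h2 : HasDerivAt (fun u : ℝ => phi (u / σ)) (-(u / σ) * phi (u / σ) * (1 / σ)) u :=
      HasDerivAt.comp (h₂ := phi) u (hasDerivAt_phi (u / σ)) ((hasDerivAt_id u).div_const σ)
    have h3 : HasDerivAt (fun u : ℝ => Phi (u * b)) (phi (u * b) * b) u :=
      HasDerivAt.comp (h₂ := Phi) u (hasDerivAt_Phi (u * b)) (hasDerivAt_mul_const b)
    have h4' := h1.sub ((h2.const_mul c).mul h3)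
    rw [hGfun]
    have hne : σ ^ 2 * lam4 - lam2 ^ 2 ≠ 0 := by rw [← hΔdef]; exact hΔ.ne'
    have hexp : (u * (s4 / sd)) ^ 2 = (u / σ) ^ 2 + (u * b) ^ 2 := by
      have e1 : (u * (s4 / sd)) ^ 2 = u ^ 2 * lam4 / Δ := by
        rw [mul_pow, div_pow, hs4sq, hsdsq]; ring
      have e2 : (u * b) ^ 2 = u ^ 2 * lam2 ^ 2 / (Δ * σ ^ 2) := by
        rw [hbdef, mul_pow, div_pow, mul_pow, hsdsq]; ring
      rw [e1, e2, div_pow]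
      field_simp
      rw [hΔdef]
      ring
    have hkey : phi (u * (s4 / sd)) = s2 * (phi (u / σ) * phi (u * b)) := by
      unfold phi
      rw [hexp, show -((u / σ) ^ 2 + (u * b) ^ 2) / 2
        = -(u / σ) ^ 2 / 2 + -(u * b) ^ 2 / 2 by ring, Real.exp_add, ← hs2def]
      field_simp
    have hconstr : sd ^ 2 = σ ^ 2 * s4 ^ 2 - lam2 ^ 2 := by rw [hs4sq, hsdsq]; linarith
    have i1 : C = s2 * (s4 / sd) - c * b := by
      rw [hCdef, hcdef, hbdef]
      field_simp
      linear_combination hconstr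
    have i2 : C * b = c * (1 / σ) * (1 / σ) := by
      rw [hCdef, hcdef, hbdef]
      field_simp
    refine HasDerivAt.congr_deriv h4' (Eq.symm ?_)
    rw [hkey]
    linear_combination (phi (u / σ) * phi (u * b)) * i1 + (u * phi (u / σ) * Phi (u * b)) * i2
  have hdiff : Differentiable ℝ G := fun u => (hDer u).differentiableAt
  have hC : 0 ≤ C := by positivity
  apply monotone_of_deriv_nonneg hdiff
  intro u
  rw [(hDer u).deriv]
  exact mul_nonneg (mul_nonneg hC (phi_pos _).le) (psi_nonneg (u * b))
end
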